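/- Let A ∈ ℝ^{m×n}, b ∈ ℝᵐ, and assume that the system A x ≤ b includes, for each j ∈ {1,…,n}, the inequalities x_j ≥ 0 and x_j ≤ 1. Let P := { x ∈ ℝⁿ : A x ≤ b } be nonempty, let P_I := convexHull(P ∩ {0,1}ⁿ) be nonempty, and let c ∈ ℝⁿ. Then sup { cᵀ x : x ∈ P_I } ≤ sup { cᵀ x : x ∈ N₊(P) } ≤ sup { cᵀ x : x ∈ P }, and all three suprema are finite. -/

import Mathlib

open Matrix

/-- Frobenius inner product `A ∙ X := trace(Aᵀ X)`. -/
noncomputable def frob {k : ℕ} (A X : Matrix (Fin k) (Fin k) ℝ) : ℝ :=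
  Matrix.trace (Aᵀ * X)

/-- The Lovász–Schrijver set `M₊(P)` for the system `A x ≤ b` (rows `a_iᵀ x ≤ b_i`):
all positive semidefinite `X ∈ ℝ^{(1+n)×(1+n)}` with `(u_i e_jᵀ) ∙ X ≥ 0`,
`(u_i (e₀ − e_j)ᵀ) ∙ X ≥ 0`, `(e_j (e₀ − e_j)ᵀ) ∙ X = 0` and `(e₀ e₀ᵀ) ∙ X = 1`,
where `u_i := (b_i, −a_i)`. -/
def Mplus {m n : ℕ} (A : Matrix (Fin m) (Fin n) ℝ) (b : Fin m → ℝ) :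
    Set (Matrix (Fin (n + 1)) (Fin (n + 1)) ℝ) :=
  {X | X.PosSemidef ∧
    (∀ (i : Fin m) (j : Fin n),
      0 ≤ frob (Matrix.vecMulVec (Fin.cons (b i) (-(A i))) (Pi.single j.succ 1)) X) ∧
    (∀ (i : Fin m) (j : Fin n),
      0 ≤ frob (Matrix.vecMulVec (Fin.cons (b i) (-(A i)))
        (Pi.single 0 1 - Pi.single j.succ 1)) X) ∧
    (∀ j : Fin n,
      frob (Matrix.vecMulVec (Pi.single j.succ 1)
        (Pi.single 0 1 - Pi.single j.succ 1)) X = 0) ∧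
    frob (Matrix.vecMulVec (Pi.single (0 : Fin (n + 1)) (1 : ℝ))
      (Pi.single (0 : Fin (n + 1)) (1 : ℝ))) X = 1}

/-- The Lovász–Schrijver relaxation
`N₊(P) := { x ∈ ℝⁿ : ∃ X ∈ M₊(P), diag(X) = (1, x) }`. -/
def Nplus {m n : ℕ} (A : Matrix (Fin m) (Fin n) ℝ) (b : Fin m → ℝ) :
    Set (Fin n → ℝ) :=
  {x | ∃ X ∈ Mplus A b, Matrix.diag X = Fin.cons 1 x}

lemma frob_vecMulVec {k : ℕ} (u v : Fin k → ℝ) (X : Matrix (Fin k) (Fin k) ℝ) :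
    frob (Matrix.vecMulVec u v) X = ∑ i, ∑ l, u i * v l * X i l := by
  simp only [frob, Matrix.trace, Matrix.diag_apply, Matrix.mul_apply,
    Matrix.transpose_apply, Matrix.vecMulVec_apply]
  rw [Finset.sum_comm]

lemma frob_single {k : ℕ} (u : Fin k → ℝ) (q : Fin k) (X : Matrix (Fin k) (Fin k) ℝ) :
    frob (Matrix.vecMulVec u (Pi.single q 1)) X = ∑ i, u i * X i q := by
  rw [frob_vecMulVec]
  refine Finset.sum_congr rfl fun i _ => ?_
  simp [Pi.single_apply, mul_ite, Finset.sum_ite_eq']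

lemma frob_sub {k : ℕ} (A B X : Matrix (Fin k) (Fin k) ℝ) :
    frob (A - B) X = frob A X - frob B X := by
  simp [frob, Matrix.transpose_sub, Matrix.sub_mul]

lemma vecMulVec_sub' {k : ℕ} (u a bb : Fin k → ℝ) :
    Matrix.vecMulVec u (a - bb) = Matrix.vecMulVec u a - Matrix.vecMulVec u bb := by
  ext i j; simp [Matrix.vecMulVec_apply, mul_sub]

lemma Nplus_subset {m n : ℕ} (A : Matrix (Fin m) (Fin n) ℝ) (b : Fin m → ℝ)
    (hP : {x : Fin n → ℝ | ∀ i, ∑ k, A i k * x k ≤ b i}.Nonempty) :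
    Nplus A b ⊆ {x : Fin n → ℝ | ∀ i, ∑ k, A i k * x k ≤ b i} := by
  rintro x ⟨X, ⟨hpsd, h1, h2, h3, h4⟩, hdiag⟩ i
  have hdiag' : ∀ t, X.diag t = (Fin.cons 1 x : Fin (n+1) → ℝ) t := fun t => congrFun hdiag t
  simp only [Matrix.diag_apply] at hdiag'
  cases n with
  | zero =>
    obtain ⟨y, hy⟩ := hP
    simpa using hy i
  | succ n' =>
    have hX00 : X 0 0 = 1 := by simpa using hdiag' 0
    have hXd : ∀ j : Fin (n' + 1), X j.succ j.succ = x j := fun j => by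
      simpa using hdiag' j.succ
    -- off-diagonal = diagonal
    have hoff : ∀ j : Fin (n' + 1), X j.succ 0 = x j := by
      intro j
      have := h3 j
      rw [vecMulVec_sub', frob_sub, frob_single, frob_single] at this
      have h0 : (∑ t, (Pi.single j.succ 1 : Fin (n'+1+1) → ℝ) t * X t 0) = X j.succ 0 := by
        simp [Pi.single_apply, ite_mul, Finset.sum_ite_eq']
      have h1' : (∑ t, (Pi.single j.succ 1 : Fin (n'+1+1) → ℝ) t * X t j.succ) = X j.succ j.succ := by
        simp [Pi.single_apply, ite_mul, Finset.sum_ite_eq']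
      rw [h0, h1'] at this
      rw [← hXd j]; linarith
    have e1 := h1 i 0
    have e2 := h2 i 0
    rw [frob_single] at e1
    rw [vecMulVec_sub', frob_sub, frob_single, frob_single] at e2
    have key : 0 ≤ ∑ t, (Fin.cons (b i) (-(A i)) : Fin (n'+1+1) → ℝ) t * X t 0 := by linarith
    rw [Fin.sum_univ_succ] at key
    simp only [Fin.cons_zero, Fin.cons_succ, Pi.neg_apply] at key
    have : ∑ j, -(A i j) * X j.succ 0 = -∑ j, A i j * x j := by
      rw [← Finset.sum_neg_distrib]
      exact Finset.sum_congr rfl fun j _ => by rw [hoff j]; ring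
    rw [hX00, this] at key
    linarith

lemma cube_subset_Nplus {m n : ℕ} (A : Matrix (Fin m) (Fin n) ℝ) (b : Fin m → ℝ) :
    {x : Fin n → ℝ | ∀ i, ∑ k, A i k * x k ≤ b i} ∩ {x | ∀ j, x j = 0 ∨ x j = 1}
      ⊆ Nplus A b := by
  rintro x ⟨hxP, hx01⟩
  set y : Fin (n + 1) → ℝ := Fin.cons 1 x with hy
  have hy0 : y 0 = 1 := rfl
  have hys : ∀ j : Fin n, y j.succ = x j := fun j => rfl
  have hx0 : ∀ j, 0 ≤ x j := fun j => by rcases hx01 j with h | h <;> simp [h]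
  have hx1 : ∀ j, x j ≤ 1 := fun j => by rcases hx01 j with h | h <;> simp [h]
  have hsum : ∀ q : Fin (n+1), ∀ u : Fin (n+1) → ℝ,
      frob (Matrix.vecMulVec u (Pi.single q 1)) (Matrix.vecMulVec y y)
        = (∑ t, u t * y t) * y q := by
    intro q u
    rw [frob_single]
    calc ∑ t, u t * Matrix.vecMulVec y y t q = ∑ t, (u t * y t) * y q := by
          refine Finset.sum_congr rfl fun t _ => ?_
          simp only [Matrix.vecMulVec_apply]; ring
      _ = (∑ t, u t * y t) * y q := by rw [Finset.sum_mul]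
  have hdotu : ∀ i : Fin m, ∑ t, (Fin.cons (b i) (-(A i)) : Fin (n+1) → ℝ) t * y t
      = b i - ∑ j, A i j * x j := by
    intro i
    rw [Fin.sum_univ_succ]
    simp only [Fin.cons_zero, Fin.cons_succ, Pi.neg_apply, hy0, hys]
    have hneg : ∑ j : Fin n, -A i j * x j = -∑ j : Fin n, A i j * x j := by
      rw [← Finset.sum_neg_distrib]
      exact Finset.sum_congr rfl fun j _ => by ring
    rw [hneg]; ring
  have hdotsingle : ∀ q : Fin (n+1), ∑ t, (Pi.single q 1 : Fin (n+1) → ℝ) t * y t = y q := by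
    intro q; simp [Pi.single_apply, ite_mul, Finset.sum_ite_eq']
  refine ⟨Matrix.vecMulVec y y, ⟨?_, ?_, ?_, ?_, ?_⟩, ?_⟩
  · rw [Matrix.posSemidef_iff_dotProduct_mulVec]; constructor
    · ext i j
      simp [Matrix.conjTranspose_apply, Matrix.vecMulVec_apply, mul_comm]
    · intro z
      have : Matrix.vecMulVec y y *ᵥ z = fun i => y i * (∑ l, y l * z l) := by
        ext i
        simp [Matrix.mulVec, dotProduct, Matrix.vecMulVec_apply,
          Finset.mul_sum, mul_assoc]
      rw [this]
      simp only [star_trivial, dotProduct]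
      have : ∑ i, z i * (y i * ∑ l, y l * z l) = (∑ l, y l * z l) ^ 2 := by
        calc ∑ i, z i * (y i * ∑ l, y l * z l)
            = ∑ i, (y i * z i) * (∑ l, y l * z l) := by
              exact Finset.sum_congr rfl fun t _ => by ring
          _ = (∑ l, y l * z l) * (∑ l, y l * z l) := by rw [Finset.sum_mul]
          _ = (∑ l, y l * z l) ^ 2 := (sq _).symm
      rw [this]
      positivity
  · intro i j
    rw [hsum, hdotu, hys]
    exact mul_nonneg (by linarith [hxP i]) (hx0 j)
  · intro i j
    rw [vecMulVec_sub', frob_sub, hsum, hsum, hdotu, hy0, hys]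
    have := hxP i
    have := hx1 j
    nlinarith
  · intro j
    rw [vecMulVec_sub', frob_sub, hsum, hsum, hdotsingle]
    rcases hx01 j with h | h <;> simp [hys, hy0, h]
  · rw [hsum, hdotsingle, hy0]; ring
  · ext t
    refine Fin.cases ?_ ?_ t
    · simp [Matrix.diag_apply, Matrix.vecMulVec_apply, hy0]
    · intro j
      simp only [Matrix.diag_apply, Matrix.vecMulVec_apply, hys, Fin.cons_succ]
      rcases hx01 j with h | h <;> simp [h]

/-- Assume the system `A x ≤ b` includes, for each `j`, the inequalities `x_j ≥ 0` and
`x_j ≤ 1`; let `P := { x : A x ≤ b }` be nonempty and `P_I := convexHull (P ∩ {0,1}ⁿ)` be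
nonempty. Then `sup { cᵀx : x ∈ P_I } ≤ sup { cᵀx : x ∈ N₊(P) } ≤ sup { cᵀx : x ∈ P }`,
and all three suprema are finite (the three sets of objective values are nonempty and
bounded above). -/
theorem objective_sup_sandwich {m n : ℕ} (A : Matrix (Fin m) (Fin n) ℝ) (b : Fin m → ℝ)
    (hlo : ∀ j : Fin n, ∃ i : Fin m, A i = -Pi.single j 1 ∧ b i = 0)
    (hhi : ∀ j : Fin n, ∃ i : Fin m, A i = Pi.single j 1 ∧ b i = 1)
    (c : Fin n → ℝ)
    (hP : {x : Fin n → ℝ | ∀ i, ∑ k, A i k * x k ≤ b i}.Nonempty)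
    (hPI : (convexHull ℝ ({x : Fin n → ℝ | ∀ i, ∑ k, A i k * x k ≤ b i} ∩
      {x | ∀ j, x j = 0 ∨ x j = 1})).Nonempty) :
    sSup ((fun x => ∑ k, c k * x k) ''
        convexHull ℝ ({x : Fin n → ℝ | ∀ i, ∑ k, A i k * x k ≤ b i} ∩
          {x | ∀ j, x j = 0 ∨ x j = 1})) ≤
      sSup ((fun x => ∑ k, c k * x k) '' Nplus A b) ∧
    sSup ((fun x => ∑ k, c k * x k) '' Nplus A b) ≤
      sSup ((fun x => ∑ k, c k * x k) ''
        {x : Fin n → ℝ | ∀ i, ∑ k, A i k * x k ≤ b i}) ∧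
    ((fun x => ∑ k, c k * x k) ''
        convexHull ℝ ({x : Fin n → ℝ | ∀ i, ∑ k, A i k * x k ≤ b i} ∩
          {x | ∀ j, x j = 0 ∨ x j = 1})).Nonempty ∧
    BddAbove ((fun x => ∑ k, c k * x k) ''
        convexHull ℝ ({x : Fin n → ℝ | ∀ i, ∑ k, A i k * x k ≤ b i} ∩
          {x | ∀ j, x j = 0 ∨ x j = 1})) ∧
    ((fun x => ∑ k, c k * x k) '' Nplus A b).Nonempty ∧
    BddAbove ((fun x => ∑ k, c k * x k) '' Nplus A b) ∧
    ((fun x => ∑ k, c k * x k) ''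
        {x : Fin n → ℝ | ∀ i, ∑ k, A i k * x k ≤ b i}).Nonempty ∧
    BddAbove ((fun x => ∑ k, c k * x k) ''
        {x : Fin n → ℝ | ∀ i, ∑ k, A i k * x k ≤ b i}) := by
  classical
  set P : Set (Fin n → ℝ) := {x : Fin n → ℝ | ∀ i, ∑ k, A i k * x k ≤ b i} with hPdef
  set f : (Fin n → ℝ) → ℝ := fun x => ∑ k, c k * x k with hfdef
  have hflin : IsLinearMap ℝ f := by
    constructor
    · intro x y
      simp only [hfdef, Pi.add_apply, mul_add, Finset.sum_add_distrib]
    · intro a x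
      simp only [hfdef, Pi.smul_apply, smul_eq_mul, Finset.mul_sum]
      exact Finset.sum_congr rfl fun k _ => by ring
  have hPbox : ∀ x ∈ P, ∀ j, 0 ≤ x j ∧ x j ≤ 1 := by
    intro x hx j
    constructor
    · obtain ⟨i, hAi, hbi⟩ := hlo j
      have h := hx i
      rw [hAi, hbi] at h
      have hs : ∑ k, (-Pi.single j 1 : Fin n → ℝ) k * x k = -x j := by
        simp [Pi.single_apply, ite_mul, Finset.sum_ite_eq']
      linarith [hs ▸ h]
    · obtain ⟨i, hAi, hbi⟩ := hhi j
      have h := hx i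
      rw [hAi, hbi] at h
      have hs : ∑ k, (Pi.single j 1 : Fin n → ℝ) k * x k = x j := by
        simp [Pi.single_apply, ite_mul, Finset.sum_ite_eq']
      linarith [hs ▸ h]
  have hub : ∀ x ∈ P, f x ≤ ∑ k, |c k| := by
    intro x hx
    refine Finset.sum_le_sum fun k _ => ?_
    obtain ⟨h0, h1⟩ := hPbox x hx k
    calc c k * x k ≤ |c k * x k| := le_abs_self _
      _ = |c k| * |x k| := abs_mul _ _
      _ ≤ |c k| * 1 := by
          refine mul_le_mul_of_nonneg_left ?_ (abs_nonneg _)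
          rw [abs_le]; constructor <;> linarith
      _ = |c k| := mul_one _
  have hBddP : BddAbove (f '' P) := by
    refine ⟨∑ k, |c k|, ?_⟩
    rintro v ⟨x, hx, rfl⟩
    exact hub x hx
  have hSne : (P ∩ {x | ∀ j, x j = 0 ∨ x j = 1}).Nonempty := by
    rwa [convexHull_nonempty_iff] at hPI
  have hSsubN : P ∩ {x | ∀ j, x j = 0 ∨ x j = 1} ⊆ Nplus A b := cube_subset_Nplus A b
  have hNsubP : Nplus A b ⊆ P := Nplus_subset A b hP
  have hPconvex : Convex ℝ P := by
    intro x hx y hy a a' ha ha' haa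
    intro i
    have hx' := hx i
    have hy' := hy i
    have hexp : ∑ k, A i k * (a • x + a' • y) k
        = a * (∑ k, A i k * x k) + a' * (∑ k, A i k * y k) := by
      rw [Finset.mul_sum, Finset.mul_sum, ← Finset.sum_add_distrib]
      refine Finset.sum_congr rfl fun k _ => ?_
      simp only [Pi.add_apply, Pi.smul_apply, smul_eq_mul]
      ring
    show ∑ k, A i k * (a • x + a' • y) k ≤ b i
    rw [hexp]
    calc a * (∑ k, A i k * x k) + a' * (∑ k, A i k * y k)
        ≤ a * b i + a' * b i := by
          exact add_le_add (mul_le_mul_of_nonneg_left hx' ha)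
            (mul_le_mul_of_nonneg_left hy' ha')
      _ = b i := by rw [← add_mul, haa, one_mul]
  have hPIsubP : convexHull ℝ (P ∩ {x | ∀ j, x j = 0 ∨ x j = 1}) ⊆ P :=
    convexHull_min Set.inter_subset_left hPconvex
  have hBddPI : BddAbove (f '' convexHull ℝ (P ∩ {x | ∀ j, x j = 0 ∨ x j = 1})) :=
    BddAbove.mono (Set.image_mono (f := f) hPIsubP) hBddP
  have hBddN : BddAbove (f '' Nplus A b) :=
    BddAbove.mono (Set.image_mono (f := f) hNsubP) hBddP
  have hNne : (Nplus A b).Nonempty := hSne.mono hSsubN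
  refine ⟨?_, ?_, hPI.image f, hBddPI, hNne.image f, hBddN, hP.image f, hBddP⟩
  · refine csSup_le (hPI.image f) ?_
    rintro v ⟨x, hx, rfl⟩
    have hconv : Convex ℝ {z : Fin n → ℝ | f z ≤ sSup (f '' Nplus A b)} :=
      convex_halfSpace_le hflin _
    have hsub : P ∩ {x | ∀ j, x j = 0 ∨ x j = 1}
        ⊆ {z : Fin n → ℝ | f z ≤ sSup (f '' Nplus A b)} := fun z hz =>
      le_csSup hBddN (Set.mem_image_of_mem f (hSsubN hz))
    exact convexHull_min hsub hconv hx
  · exact csSup_le_csSup hBddP (hNne.image f) (Set.image_mono (f := f) hNsubP)
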